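/- arXiv:2309.02738 — 2 statements merged into one kernel-verified Lean document; each statement's English description precedes it below -/
import Mathlib

section
/- Let F_q be a finite field with q odd. For nonzero coprime polynomials α, β ∈ F_q[t], the quadratic residue symbols satisfy the reciprocity law: (α/β)·(β/α)^{-1} = (-1)^{((q-1)/2)·deg(α)·deg(β)} · sgn(α)^{((q-1)/2)·deg(β)} · sgn(β)^{-((q-1)/2)·deg(α)}, where sgn denotes the leading coefficient. -/
open Polynomial UniqueFactorizationMonoid

open scoped Classical in
/-- The quadratic residue symbol `(α/P) ∈ {0, ±1}` (as an element of `F`) for a monic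
irreducible `P`, defined via Euler's criterion `α^((q^{deg P}-1)/2) ≡ (α/P) mod P`. -/
noncomputable def eulerSym (F : Type) [Field F] [Fintype F] (α P : Polynomial F) : F :=
  if P ∣ α ^ ((Fintype.card F ^ P.natDegree - 1) / 2) - 1 then 1
  else if P ∣ α ^ ((Fintype.card F ^ P.natDegree - 1) / 2) + 1 then -1 else 0

open scoped Classical in
/-- The general quadratic residue symbol `(α/β)`, extended multiplicatively over the
monic irreducible factors (with multiplicity) of `β`. -/
noncomputable def qrSym (F : Type) [Field F] [Fintype F] (α β : Polynomial F) : F :=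
  ((normalizedFactors β).map fun P => eulerSym F α P).prod

section Helpers

variable (F : Type) [Field F] [Fintype F]

local notation "Ω" => AlgebraicClosure F
local notation "f" => algebraMap F (AlgebraicClosure F)
local notation "q" => Fintype.card F

/-- helper: the `q^i`-power map is a ring hom on the algebraic closure. -/
theorem frobHom (i : ℕ) : ∃ ψ : Ω →+* Ω, ∀ z : Ω, ψ z = z ^ q ^ i := by
  set p := ringChar F with hp
  haveI : CharP F p := ringChar.charP F
  haveI hfp : Fact p.Prime := ⟨CharP.char_is_prime F p⟩
  haveI : CharP Ω p := charP_of_injective_algebraMap (algebraMap F Ω).injective p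
  obtain ⟨n, -, hqn⟩ := FiniteField.card F p
  have hq : q ^ i = p ^ ((n : ℕ) * i) := by rw [hqn, ← pow_mul]
  exact ⟨iterateFrobenius Ω p ((n : ℕ) * i), fun z => by rw [iterateFrobenius_def, hq]⟩

/-- helper: evaluation of a mapped polynomial commutes with `q^i`-powers. -/
theorem frobEval (g : Polynomial F) (y : Ω) (i : ℕ) :
    (g.map f).eval (y ^ q ^ i) = ((g.map f).eval y) ^ q ^ i := by
  set p := ringChar F with hp
  haveI : CharP F p := ringChar.charP F
  haveI hfp : Fact p.Prime := ⟨CharP.char_is_prime F p⟩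
  haveI : CharP Ω p := charP_of_injective_algebraMap (algebraMap F Ω).injective p
  obtain ⟨n, -, hqn⟩ := FiniteField.card F p
  have hq : q ^ i = p ^ ((n : ℕ) * i) := by rw [hqn, ← pow_mul]
  set ψ : Ω →+* Ω := iterateFrobenius Ω p ((n : ℕ) * i) with hψ
  have hψdef : ∀ z : Ω, ψ z = z ^ q ^ i := fun z => by
    rw [hψ, iterateFrobenius_def, hq]
  have hmap : (g.map f).map ψ = g.map f := by
    rw [Polynomial.map_map]
    congr 1
    ext a
    simp only [RingHom.comp_apply, hψdef]
    rw [← map_pow, FiniteField.pow_card_pow]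
  calc (g.map f).eval (y ^ q ^ i) = ((g.map f).map ψ).eval (ψ y) := by
        rw [hmap, hψdef]
    _ = ψ ((g.map f).eval y) := by rw [Polynomial.eval_map, Polynomial.eval₂_hom]
    _ = ((g.map f).eval y) ^ q ^ i := hψdef _

end Helpers

section Roots

variable (F : Type) [Field F] [Fintype F]

local notation "Ω" => AlgebraicClosure F
local notation "f" => algebraMap F (AlgebraicClosure F)
local notation "q" => Fintype.card F

theorem keyRoots (P : Polynomial F) (hP : Irreducible P) {θ : Ω}
    (hθ : (P.map f).eval θ = 0) :
    (P.map f).roots = (Multiset.range P.natDegree).map (fun i => θ ^ q ^ i) := by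
  classical
  haveI : Fact (Irreducible P) := ⟨hP⟩
  set K := AdjoinRoot P with hK
  haveI : Module.Finite F K := Module.Finite.of_basis (AdjoinRoot.powerBasis hP.ne_zero).basis
  haveI : Finite K := Module.finite_of_finite F
  haveI : Fintype K := Fintype.ofFinite K
  set d := P.natDegree with hd
  have hd0 : 0 < d := hP.natDegree_pos
  have hcard : Fintype.card K = q ^ d := by
    rw [Module.card_eq_pow_finrank (K := F) (V := K),
      (AdjoinRoot.powerBasis hP.ne_zero).finrank]
    rfl
  have hq1 : 1 < q := Fintype.one_lt_card
  have hpe : P.eval₂ f θ = 0 := by rwa [Polynomial.eval₂_eq_eval_map]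
  set σ : K →+* Ω := AdjoinRoot.lift f θ hpe with hσ
  have hσmk : ∀ g : Polynomial F, σ (AdjoinRoot.mk P g) = (g.map f).eval θ := fun g => by
    rw [hσ, AdjoinRoot.lift_mk, Polynomial.eval₂_eq_eval_map]
  -- injectivity of i ↦ θ ^ q ^ i on range d
  have hinj : ∀ i ∈ Multiset.range d, ∀ j ∈ Multiset.range d,
      θ ^ q ^ i = θ ^ q ^ j → i = j := by
    have key : ∀ k, 0 < k → k < d → θ ^ q ^ k ≠ θ := by
      intro k hk0 hkd hθk
      -- all σ z are fixed by q^k power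
      have hfix : ∀ z : K, (σ z) ^ q ^ k = σ z := by
        intro z
        obtain ⟨g, rfl⟩ := AdjoinRoot.mk_surjective z
        rw [hσmk, ← frobEval, hθk]
      -- so K injects into roots of X ^ q ^ k - X
      set W : Polynomial Ω := X ^ q ^ k - X with hW
      have hW0 : W ≠ 0 := by
        intro h
        have h2 : (1 : ℕ) < q ^ k := one_lt_pow₀ hq1 hk0.ne' 
        have : W.coeff (q ^ k) = 1 := by
          have hne : ¬ (1 = q ^ k) := by omega
          rw [hW, Polynomial.coeff_sub, Polynomial.coeff_X_pow, Polynomial.coeff_X,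
            if_pos rfl, if_neg hne, sub_zero]
        rw [h] at this
        simp at this
      have hmem : ∀ z : K, σ z ∈ W.roots.toFinset := by
        intro z
        rw [Multiset.mem_toFinset, Polynomial.mem_roots hW0]
        simp only [Polynomial.IsRoot.def, hW, Polynomial.eval_sub, Polynomial.eval_pow,
          Polynomial.eval_X]
        rw [hfix z, sub_self]
      have hcardle : Fintype.card K ≤ (Multiset.toFinset W.roots).card := by
        have := Finset.card_le_card_of_injOn (s := Finset.univ) (fun z : K => σ z)
          (fun z _ => hmem z) (fun a _ b _ h => σ.injective h)
        simpa using this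
      have hub : (Multiset.toFinset W.roots).card ≤ q ^ k := by
        refine le_trans (Multiset.toFinset_card_le _) (le_trans (Polynomial.card_roots' W) ?_)
        refine le_trans (Polynomial.natDegree_sub_le _ _) ?_
        simp only [Polynomial.natDegree_X_pow, Polynomial.natDegree_X]
        exact max_le le_rfl (Nat.one_le_pow _ _ (by omega))
      have : q ^ d ≤ q ^ k := hcard ▸ le_trans hcardle hub
      have := (pow_le_pow_iff_right₀ hq1).mp this
      omega
    intro i hi j hj hij
    rw [Multiset.mem_range] at hi hj
    by_contra hne
    wlog hlt : i < j generalizing i j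
    · exact this j hj i hi hij.symm (Ne.symm hne) (by omega)
    have hji : θ ^ q ^ (j - i) = θ := by
      obtain ⟨ψ, hψ⟩ := frobHom F i
      refine ψ.injective ?_
      rw [hψ, hψ, ← pow_mul, ← pow_add, Nat.sub_add_cancel hlt.le, hij]
    exact key (j - i) (by omega) (by omega) hji
  -- each θ ^ q ^ i is a root
  have hroot : ∀ i : ℕ, (P.map f).eval (θ ^ q ^ i) = 0 := by
    intro i
    rw [frobEval, hθ, zero_pow (pow_ne_zero _ (by positivity))]
  have hmapne : P.map f ≠ 0 :=
    (Polynomial.map_ne_zero_iff (algebraMap F Ω).injective).mpr hP.ne_zero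
  set T : Multiset Ω := (Multiset.range d).map (fun i => θ ^ q ^ i) with hT
  have hTnodup : T.Nodup := Multiset.Nodup.map_on hinj (Multiset.nodup_range d)
  have hle : T ≤ (P.map f).roots := by
    rw [Multiset.le_iff_subset hTnodup]
    intro a ha
    rw [hT, Multiset.mem_map] at ha
    obtain ⟨i, -, rfl⟩ := ha
    rw [Polynomial.mem_roots hmapne]
    exact hroot i
  have hcards : Multiset.card ((P.map f).roots) ≤ Multiset.card T := by
    rw [hT, Multiset.card_map, Multiset.card_range,
      ← (IsAlgClosed.splits (P.map f)).natDegree_eq_card_roots, Polynomial.natDegree_map]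
  exact (Multiset.eq_of_le_of_card_le hle hcards).symm

end Roots

section Euler

variable (F : Type) [Field F] [Fintype F]

local notation "Ω" => AlgebraicClosure F
local notation "f" => algebraMap F (AlgebraicClosure F)
local notation "q" => Fintype.card F

theorem eulerSym_eq (hq : Odd q) (P α : Polynomial F) (hP : Irreducible P) (hPa : ¬ P ∣ α) :
    f (eulerSym F α P) =
      (((P.map f).roots).map (fun θ => (α.map f).eval θ)).prod ^ ((q - 1) / 2) := by
  classical
  haveI : Fact (Irreducible P) := ⟨hP⟩
  set K := AdjoinRoot P with hK
  haveI : Module.Finite F K := Module.Finite.of_basis (AdjoinRoot.powerBasis hP.ne_zero).basis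
  haveI : Finite K := Module.finite_of_finite F
  haveI : Fintype K := Fintype.ofFinite K
  set d := P.natDegree with hd
  have hd0 : 0 < d := hP.natDegree_pos
  have hq1 : 1 < q := Fintype.one_lt_card
  have hcard : Fintype.card K = q ^ d := by
    rw [Module.card_eq_pow_finrank (K := F) (V := K),
      (AdjoinRoot.powerBasis hP.ne_zero).finrank]
    rfl
  -- a root of P in Ω
  obtain ⟨θ, hθ⟩ : ∃ θ : Ω, (P.map f).eval θ = 0 := by
    obtain ⟨θ, hθ⟩ := IsAlgClosed.exists_root (P.map f)
      (by rw [Polynomial.degree_map]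
          exact (Polynomial.natDegree_pos_iff_degree_pos.mp hd0).ne')
    exact ⟨θ, hθ⟩
  have hpe : P.eval₂ f θ = 0 := by rwa [Polynomial.eval₂_eq_eval_map]
  set σ : K →+* Ω := AdjoinRoot.lift f θ hpe with hσ
  have hσmk : ∀ g : Polynomial F, σ (AdjoinRoot.mk P g) = (g.map f).eval θ := fun g => by
    rw [hσ, AdjoinRoot.lift_mk, Polynomial.eval₂_eq_eval_map]
  set e := (q - 1) / 2 with he
  set m := (q ^ d - 1) / 2 with hm
  set s := ∑ i ∈ Finset.range d, q ^ i with hs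
  have he2 : 2 * e = q - 1 := by obtain ⟨c, hc⟩ := hq; omega
  have hqd : Odd (q ^ d) := hq.pow
  have hm2 : 2 * m = q ^ d - 1 := by obtain ⟨c, hc⟩ := hqd; omega
  have h1d : (1 : ℕ) ≤ q ^ d := Nat.one_le_pow _ _ (by omega)
  have hgs : (q - 1) * s = q ^ d - 1 := by
    have hz := geom_sum_mul (q : ℤ) d
    zify [h1d, hq1.le]
    push_cast [hs]
    linarith
  have hes : e * s = m := by
    have h2 : 2 * (e * s) = 2 * m := by rw [← mul_assoc, he2, hgs, hm2]
    omega
  set x : K := AdjoinRoot.mk P α with hx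
  have hx0 : x ≠ 0 := by rwa [hx, Ne, AdjoinRoot.mk_eq_zero]
  have hxx : x ^ m * x ^ m = 1 := by
    rw [← pow_add]
    have hmm : m + m = Fintype.card K - 1 := by rw [hcard]; omega
    rw [hmm]
    exact FiniteField.pow_card_sub_one_eq_one x hx0
  have hchar : (-1 : K) ≠ 1 := by
    intro h
    have h2 : (2 : K) = 0 := by linear_combination -h
    set p := ringChar F with hp
    haveI : CharP F p := ringChar.charP F
    haveI hfp : Fact p.Prime := ⟨CharP.char_is_prime F p⟩
    haveI : CharP K p := charP_of_injective_algebraMap (algebraMap F K).injective p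
    have hpd : (p : ℕ) ∣ 2 := by
      rw [← CharP.cast_eq_zero_iff K p 2]
      exact_mod_cast h2
    have hp2 : p = 2 := (Nat.prime_dvd_prime_iff_eq hfp.out Nat.prime_two).mp hpd
    obtain ⟨n, -, hqn⟩ := FiniteField.card F p
    rw [Nat.odd_iff] at hq
    rw [hqn, hp2] at hq
    have : 2 ^ (n : ℕ) % 2 = 0 := Nat.pow_mod 2 n 2 ▸ by
      simp [Nat.pow_mod, n.pos.ne']
    omega
  set z : Ω := (α.map f).eval θ with hz
  have hzσ : z = σ x := (hσmk α).symm
  have hRHS : (((P.map f).roots).map (fun θ' => (α.map f).eval θ')).prod ^ e = σ (x ^ m) := by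
    rw [keyRoots F P hP hθ, Multiset.map_map]
    have h1 : ((Multiset.range d).map ((fun θ' => (α.map f).eval θ') ∘ fun i => θ ^ q ^ i))
        = (Multiset.range d).map (fun i => z ^ q ^ i) := by
      apply Multiset.map_congr rfl
      intro i _
      exact frobEval F α θ i
    rw [h1, ← Finset.range_val, ← Finset.prod_eq_multiset_prod,
      Finset.prod_pow_eq_pow_sum, ← hs, ← pow_mul, mul_comm s e, hes, map_pow, ← hzσ]
  have hmeq : (q ^ P.natDegree - 1) / 2 = m := by rw [hm, hd]
  rcases mul_self_eq_one_iff.mp hxx with hx1 | hxm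
  · have hdvd : P ∣ α ^ m - 1 := by
      rw [← AdjoinRoot.mk_eq_zero, map_sub, map_pow, map_one, ← hx, hx1, sub_self]
    rw [eulerSym, hmeq, if_pos hdvd, map_one, hRHS, hx1, map_one]
  · have hnot : ¬ P ∣ α ^ m - 1 := by
      intro h
      rw [← AdjoinRoot.mk_eq_zero, map_sub, map_pow, map_one, ← hx, hxm, sub_eq_zero] at h
      exact hchar h
    have hdvd : P ∣ α ^ m + 1 := by
      rw [← AdjoinRoot.mk_eq_zero, map_add, map_pow, map_one, ← hx, hxm, neg_add_cancel]
    rw [eulerSym, hmeq, if_neg hnot, if_pos hdvd, map_neg, map_one, hRHS, hxm, map_neg, map_one]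

end Euler

section Global

variable (F : Type) [Field F] [Fintype F]

local notation "Ω" => AlgebraicClosure F
local notation "f" => algebraMap F (AlgebraicClosure F)
local notation "q" => Fintype.card F

/-- the root-product `∏_{β(θ)=0} α(θ)` in the algebraic closure -/
noncomputable def rprod (α β : Polynomial F) : AlgebraicClosure F :=
  (((β.map (algebraMap F (AlgebraicClosure F))).roots).map
    fun θ => (α.map (algebraMap F (AlgebraicClosure F))).eval θ).prod

theorem qrSym_eq (hq : Odd q) (α β : Polynomial F) (hβ : β ≠ 0) (hco : IsCoprime α β) :
    f (qrSym F α β) = rprod F α β ^ ((q - 1) / 2) := by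
  classical
  have hmul : f (qrSym F α β)
      = ((normalizedFactors β).map fun P => f (eulerSym F α P)).prod := by
    rw [qrSym, map_multiset_prod, Multiset.map_map]
    rfl
  have hstep : ((normalizedFactors β).map fun P => f (eulerSym F α P))
      = (normalizedFactors β).map fun P =>
          (((P.map f).roots).map (fun θ => (α.map f).eval θ)).prod ^ ((q - 1) / 2) := by
    apply Multiset.map_congr rfl
    intro P hP
    have hirr : Irreducible P := irreducible_of_normalized_factor P hP
    have hPβ : P ∣ β := dvd_of_mem_normalizedFactors hP
    have hPa : ¬ P ∣ α := fun h => hirr.not_isUnit (hco.isUnit_of_dvd' h hPβ)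
    exact eulerSym_eq F hq P α hirr hPa
  rw [hmul, hstep, Multiset.prod_map_pow]
  congr 1
  -- β and the product of its normalized factors have the same roots
  obtain ⟨u, hu⟩ := (prod_normalizedFactors hβ).symm
  obtain ⟨c, hc1, hc2⟩ := Polynomial.isUnit_iff.mp u.isUnit
  have hc0 : c ≠ 0 := hc1.ne_zero
  have hroots : ((normalizedFactors β).prod.map f).roots = (β.map f).roots := by
    rw [← hu, ← hc2, Polynomial.map_mul, Polynomial.map_C, mul_comm,
      Polynomial.roots_C_mul _ (by simpa using hc0)]
  have h0 : (0 : Polynomial Ω) ∉ (normalizedFactors β).map (Polynomial.map f) := by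
    intro h
    rw [Multiset.mem_map] at h
    obtain ⟨P, hP, hP0⟩ := h
    exact (irreducible_of_normalized_factor P hP).ne_zero
      ((Polynomial.map_eq_zero_iff (algebraMap F Ω).injective).mp hP0)
  rw [rprod, ← hroots, Polynomial.map_multiset_prod,
    Polynomial.roots_multiset_prod _ h0, Multiset.bind_map, Multiset.map_bind,
    Multiset.prod_bind]

end Global

section Symm

variable (F : Type) [Field F] [Fintype F]

local notation "Ω" => AlgebraicClosure F
local notation "f" => algebraMap F (AlgebraicClosure F)
local notation "q" => Fintype.card F

theorem eval_eq_lc_mul (α : Polynomial F) (hα : α ≠ 0) (y : Ω) :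
    (α.map f).eval y
      = f α.leadingCoeff * (((α.map f).roots).map fun x => y - x).prod := by
  have hs : ((α.map f)).Splits :=
    IsAlgClosed.splits _
  conv_lhs => rw [hs.eq_prod_roots]
  rw [Polynomial.eval_mul, Polynomial.eval_C, Polynomial.eval_multiset_prod,
    Multiset.map_map, Polynomial.leadingCoeff_map]
  congr 1
  refine congrArg Multiset.prod (Multiset.map_congr rfl fun x _ => ?_)
  simp

theorem card_roots_eq (α : Polynomial F) :
    Multiset.card ((α.map f).roots) = α.natDegree :=
  by rw [← (IsAlgClosed.splits (α.map f)).natDegree_eq_card_roots, Polynomial.natDegree_map]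

theorem rprod_symm (α β : Polynomial F) (hα : α ≠ 0) (hβ : β ≠ 0) :
    rprod F α β * (f β.leadingCoeff) ^ α.natDegree =
      (-1 : Ω) ^ (α.natDegree * β.natDegree) * (f α.leadingCoeff) ^ β.natDegree
        * rprod F β α := by
  have h1 : rprod F α β = (f α.leadingCoeff) ^ β.natDegree *
      (((β.map f).roots).map fun θ => (((α.map f).roots).map fun x => θ - x).prod).prod := by
    rw [rprod]
    have heq : (((β.map f).roots).map fun θ => (α.map f).eval θ)
        = ((β.map f).roots).map
            fun θ => f α.leadingCoeff * (((α.map f).roots).map fun x => θ - x).prod :=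
      Multiset.map_congr rfl (fun θ _ => eval_eq_lc_mul F α hα θ)
    rw [heq, Multiset.prod_map_mul, Multiset.map_const', Multiset.prod_replicate,
      card_roots_eq]
  have h2 : rprod F β α = (f β.leadingCoeff) ^ α.natDegree *
      (((α.map f).roots).map fun x => (((β.map f).roots).map fun θ => x - θ).prod).prod := by
    rw [rprod]
    have heq : (((α.map f).roots).map fun x => (β.map f).eval x)
        = ((α.map f).roots).map
            fun x => f β.leadingCoeff * (((β.map f).roots).map fun θ => x - θ).prod :=
      Multiset.map_congr rfl (fun x _ => eval_eq_lc_mul F β hβ x)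
    rw [heq, Multiset.prod_map_mul, Multiset.map_const', Multiset.prod_replicate,
      card_roots_eq]
  have hD : (((β.map f).roots).map fun θ => (((α.map f).roots).map fun x => θ - x).prod).prod
      = (-1 : Ω) ^ (α.natDegree * β.natDegree) *
        (((α.map f).roots).map fun x => (((β.map f).roots).map fun θ => x - θ).prod).prod := by
    have hswap : (((β.map f).roots).map fun θ => (((α.map f).roots).map fun x => θ - x).prod).prod
        = (((α.map f).roots).map fun x => (((β.map f).roots).map fun θ => θ - x).prod).prod :=
      Multiset.prod_map_prod_map _ _
    rw [hswap]
    have hneg : (((α.map f).roots).map fun x => (((β.map f).roots).map fun θ => θ - x).prod).prod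
        = (((α.map f).roots).map fun x =>
            (-1 : Ω) ^ β.natDegree * (((β.map f).roots).map fun θ => x - θ).prod).prod := by
      apply congrArg
      apply Multiset.map_congr rfl
      intro x _
      have : (((β.map f).roots).map fun θ => θ - x)
          = ((β.map f).roots).map fun θ => (-1) * (x - θ) := by
        apply Multiset.map_congr rfl; intro θ _; ring
      rw [this, Multiset.prod_map_mul, Multiset.map_const', Multiset.prod_replicate,
        card_roots_eq]
    rw [hneg, Multiset.prod_map_mul, Multiset.map_const', Multiset.prod_replicate,
      card_roots_eq, ← pow_mul, mul_comm β.natDegree α.natDegree]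
  rw [h1, h2, hD]
  ring

end Symm

section Final

variable (F : Type) [Field F] [Fintype F]

local notation "Ω" => AlgebraicClosure F
local notation "f" => algebraMap F (AlgebraicClosure F)
local notation "q" => Fintype.card F

theorem rprod_ne_zero (α β : Polynomial F) (hco : IsCoprime α β) : rprod F β α ≠ 0 := by
  rw [rprod]
  apply Multiset.prod_ne_zero
  rw [Multiset.mem_map]
  rintro ⟨x, hx, hx0⟩
  have hte : (α.map f).eval x = 0 := Polynomial.isRoot_of_mem_roots hx
  have hcm : IsCoprime (α.map f) (β.map f) := hco.map (Polynomial.mapRingHom f)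
  obtain ⟨u, v, huv⟩ := hcm
  have := congrArg (Polynomial.eval x) huv
  simp only [Polynomial.eval_add, Polynomial.eval_mul, Polynomial.eval_one, hte, hx0,
    mul_zero, add_zero, zero_add] at this
  exact zero_ne_one this

theorem stmt6' (hq : Odd q) (α β : Polynomial F) (hα : α ≠ 0) (hβ : β ≠ 0)
    (hco : IsCoprime α β) :
    qrSym F α β * (qrSym F β α)⁻¹ =
      (-1 : F) ^ ((Fintype.card F - 1) / 2 * α.natDegree * β.natDegree) *
        α.leadingCoeff ^ ((Fintype.card F - 1) / 2 * β.natDegree) *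
        (β.leadingCoeff ^ ((Fintype.card F - 1) / 2 * α.natDegree))⁻¹ := by
  set e := (q - 1) / 2 with he
  set da := α.natDegree
  set db := β.natDegree
  apply (algebraMap F Ω).injective
  rw [map_mul, map_inv₀, qrSym_eq F hq α β hβ hco, qrSym_eq F hq β α hα hco.symm,
    map_mul, map_mul, map_inv₀, map_pow, map_pow, map_pow, map_neg, map_one]
  set A := rprod F α β
  set B := rprod F β α
  set La := f α.leadingCoeff
  set Lb := f β.leadingCoeff
  have hB : B ≠ 0 := rprod_ne_zero F α β hco
  have hLb : Lb ≠ 0 := by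
    simp only [Lb, ne_eq, _root_.map_eq_zero]
    exact Polynomial.leadingCoeff_ne_zero.mpr hβ
  have hsymm := rprod_symm F α β hα hβ
  have hx := congrArg (· ^ e) hsymm
  simp only [mul_pow, ← pow_mul] at hx
  rw [show e * da * db = da * db * e by ring, show e * db = db * e by ring,
    show e * da = da * e by ring, ← div_eq_mul_inv, ← div_eq_mul_inv,
    div_eq_div_iff (pow_ne_zero _ hB) (pow_ne_zero _ hLb)]
  linear_combination hx

end Final

/-- The general quadratic reciprocity law in `F_q[t]` (`q` odd): for coprime nonzero
`α, β`, `(α/β)·(β/α)⁻¹ = (-1)^{((q-1)/2)·deg α·deg β} · sgn(α)^{((q-1)/2)·deg β} ·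
sgn(β)^{-((q-1)/2)·deg α}`. -/
theorem stmt6 (F : Type) [Field F] [Fintype F] (hq : Odd (Fintype.card F))
    (α β : Polynomial F) (hα : α ≠ 0) (hβ : β ≠ 0) (hco : IsCoprime α β) :
    qrSym F α β * (qrSym F β α)⁻¹ =
      (-1 : F) ^ ((Fintype.card F - 1) / 2 * α.natDegree * β.natDegree) *
        α.leadingCoeff ^ ((Fintype.card F - 1) / 2 * β.natDegree) *
        (β.leadingCoeff ^ ((Fintype.card F - 1) / 2 * α.natDegree))⁻¹ :=
  stmt6' F hq α β hα hβ hco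
end

section
/- Let F_q be a finite field with q odd, and let P, Q be distinct monic irreducible polynomials in F_q[t] such that ((q-1)/2)·deg(P)·deg(Q) is even. Then (Q/P) = (P/Q), where (·/·) is the quadratic residue symbol in F_q[t]. -/
open Polynomial

section AuxQR

variable {F K : Type} [Field F] [Fintype F] [Field K] [Algebra F K]

/-- Fixed points of `x ↦ x ^ card F` in an `F`-algebra field lie in the image of `F`. -/
private lemma auxQR_fixed (x : K) (hx : x ^ (Fintype.card F) = x) :
    ∃ c : F, algebraMap F K c = x := by
  classical
  set q := Fintype.card F with hq
  have h1q : 1 < q := Fintype.one_lt_card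
  have hne : (X ^ q - X : K[X]) ≠ 0 := FiniteField.X_pow_card_sub_X_ne_zero K h1q
  have hdeg : (X ^ q - X : K[X]).natDegree = q := FiniteField.X_pow_card_sub_X_natDegree_eq K h1q
  set T : Finset K := Finset.univ.image (algebraMap F K) with hT
  have hTsub : T ⊆ (X ^ q - X : K[X]).roots.toFinset := by
    intro y hy
    simp only [hT, Finset.mem_image] at hy
    obtain ⟨c, -, rfl⟩ := hy
    rw [Multiset.mem_toFinset, mem_roots hne]
    simp only [IsRoot, eval_sub, eval_pow, eval_X]
    rw [← map_pow, FiniteField.pow_card, sub_self]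
  have hTcard : T.card = q := by
    rw [hT, Finset.card_image_of_injective _ (algebraMap F K).injective, Finset.card_univ]
  have hle : ((X ^ q - X : K[X]).roots.toFinset).card ≤ q := by
    calc ((X ^ q - X : K[X]).roots.toFinset).card ≤ Multiset.card (X ^ q - X : K[X]).roots :=
          Multiset.toFinset_card_le _
      _ ≤ (X ^ q - X : K[X]).natDegree := card_roots' _
      _ = q := hdeg
  have hTeq : T = (X ^ q - X : K[X]).roots.toFinset :=
    Finset.eq_of_subset_of_card_le hTsub (by rw [hTcard]; exact hle)
  have hxmem : x ∈ (X ^ q - X : K[X]).roots.toFinset := by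
    rw [Multiset.mem_toFinset, mem_roots hne]
    simp only [IsRoot, eval_sub, eval_pow, eval_X]
    rw [hx, sub_self]
  rw [← hTeq, hT, Finset.mem_image] at hxmem
  obtain ⟨c, -, hc⟩ := hxmem
  exact ⟨c, hc⟩

/-- A root of an irreducible polynomial of degree `d` satisfies `α ^ q ^ d = α`. -/
private lemma auxQR_pow {P : F[X]} (hPi : Irreducible P) (α : K) (hα : aeval α P = 0) :
    α ^ (Fintype.card F) ^ P.natDegree = α := by
  haveI : Fact (Irreducible P) := ⟨hPi⟩
  letI : Fintype (AdjoinRoot P) :=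
    Module.fintypeOfFintype (AdjoinRoot.powerBasis hPi.ne_zero).basis
  have hcard : Fintype.card (AdjoinRoot P) = Fintype.card F ^ P.natDegree := by
    rw [Module.card_fintype (AdjoinRoot.powerBasis hPi.ne_zero).basis]
    simp [AdjoinRoot.powerBasis]
    congr 1; exact (Fintype.card_congr (Equiv.refl _)).trans (Fintype.card_fin _)
  have hroot : (AdjoinRoot.liftAlgHom P (Algebra.ofId F K) α (by rw [aeval_def] at hα; exact hα)) (AdjoinRoot.root P) = α := AdjoinRoot.liftAlgHom_root _ _ _ _
  have h := FiniteField.pow_card (AdjoinRoot.root P)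
  rw [hcard] at h
  rw [← hroot, ← map_pow, h]

private lemma auxQR_sum {q : ℕ} (hq : Odd q) (d : ℕ) :
    (∑ i ∈ Finset.range d, q ^ i) * ((q - 1) / 2) = (q ^ d - 1) / 2 := by
  obtain ⟨k, hk⟩ := hq
  have h1 : q - 1 = 2 * k := by omega
  have h2 : (q : ℤ) ^ d - 1 = ((∑ i ∈ Finset.range d, q ^ i : ℕ) : ℤ) * ((q : ℤ) - 1) := by
    push_cast
    rw [geom_sum_mul]
  have hq1 : 1 ≤ q ^ d := Nat.one_le_pow _ _ (by omega)
  have h3 : q ^ d - 1 = (∑ i ∈ Finset.range d, q ^ i) * (q - 1) := by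
    have := h2
    zify [hq1, show 1 ≤ q by omega] at this ⊢
    linarith
  rw [h3, h1, Nat.mul_div_cancel_left k (by norm_num),
    show (∑ i ∈ Finset.range d, q ^ i) * (2 * k) = 2 * ((∑ i ∈ Finset.range d, q ^ i) * k) by ring,
    Nat.mul_div_cancel_left _ (by norm_num)]

/-- An irreducible monic `P` factors over a splitting field as the product of
`X - C (α ^ q ^ i)` over the Frobenius conjugates of a root `α`. -/
private lemma auxQR_factor (φ : K →+* K) (hφ : ∀ x : K, φ x = x ^ Fintype.card F)
    {P : F[X]} (hP : P.Monic) (hPi : Irreducible P) (α : K) (hα : aeval α P = 0) :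
    P.map (algebraMap F K) =
      ∏ i ∈ Finset.range P.natDegree, (X - C (α ^ Fintype.card F ^ i)) := by
  classical
  set q := Fintype.card F with hqdef
  set d := P.natDegree with hddef
  have hαd : α ^ q ^ d = α := auxQR_pow hPi α hα
  set g : ℕ → K[X] := fun i => X - C (α ^ q ^ i) with hg
  set R : K[X] := ∏ i ∈ Finset.range d, g i with hR
  have hRmonic : R.Monic := monic_prod_of_monic _ _ fun i _ => monic_X_sub_C _
  have hRdeg : R.natDegree = d := by
    rw [hR, natDegree_prod_of_monic _ _ fun i _ => monic_X_sub_C _]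
    simp only [hg, natDegree_X_sub_C]
    simp
  have hg0 : g 0 = X - C α := by simp [hg]
  have hgd : g d = g 0 := by rw [hg]; simp [hαd]
  have hmapφ : ∀ i, (g i).map φ = g (i + 1) := by
    intro i
    rw [hg]
    simp only [Polynomial.map_sub, map_X, map_C, hφ]
    rw [← pow_mul, ← pow_succ]
  have hmap : R.map φ = R := by
    rw [hR, Polynomial.map_prod]
    simp only [hmapφ]
    have h1 : (∏ i ∈ Finset.range d, g (i + 1)) * g 0 = (∏ i ∈ Finset.range d, g i) * g 0 := by
      rw [← Finset.prod_range_succ' g d, Finset.prod_range_succ, hgd]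
    exact mul_right_cancel₀ (by rw [hg0]; exact X_sub_C_ne_zero α) h1
  have hcoeff : ∀ n, R.coeff n ∈ Set.range (algebraMap F K) := by
    intro n
    refine auxQR_fixed (R.coeff n) ?_
    conv_rhs => rw [← hmap]
    rw [coeff_map, hφ]
  obtain ⟨R₀, hmapR₀, hdegR₀, hmonR₀⟩ :=
    lifts_and_degree_eq_and_monic ((lifts_iff_coeff_lifts _).2 hcoeff) hRmonic
  have hd0 : 0 < d := hPi.natDegree_pos
  have haR₀ : aeval α R₀ = 0 := by
    rw [aeval_def, ← eval_map, hmapR₀, hR, eval_prod]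
    refine Finset.prod_eq_zero (Finset.mem_range.2 hd0) ?_
    simp [hg]
  have hmin : minpoly F α = P := (minpoly.eq_of_irreducible_of_monic hPi hα hP).symm
  have hdvd : P ∣ R₀ := hmin ▸ minpoly.dvd F α haR₀
  have hdeg' : R₀.natDegree = d := by
    rw [natDegree_eq_of_degree_eq hdegR₀, hRdeg]
  obtain ⟨c, hc⟩ := hdvd
  have hc0 : c ≠ 0 := by
    rintro rfl
    rw [mul_zero] at hc
    exact hmonR₀.ne_zero hc
  have hcdeg : c.natDegree = 0 := by
    have := natDegree_mul hPi.ne_zero hc0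
    rw [← hc, hdeg'] at this
    omega
  have hclead : c.leadingCoeff = 1 := by
    have := hmonR₀.leadingCoeff
    rw [hc, leadingCoeff_mul, hP.leadingCoeff, one_mul] at this
    exact this
  have hc1 : c = 1 := by
    rw [eq_C_of_natDegree_eq_zero hcdeg]
    rw [leadingCoeff, hcdeg] at hclead
    rw [hclead, map_one]
  have hPR₀ : P = R₀ := by rw [hc, hc1, mul_one]
  rw [hPR₀, hmapR₀]

end AuxQR

/-- Quadratic reciprocity in `F_q[t]` for monic irreducibles: if `P ≠ Q` are monic
irreducible and `((q-1)/2)·deg P·deg Q` is even, then `(Q/P) = (P/Q)`, where the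
symbols `e₁ = (Q/P)` and `e₂ = (P/Q)` are characterized by Euler's criterion. -/
theorem stmt18 (F : Type) [Field F] [Fintype F] (hq : Odd (Fintype.card F))
    (P Q : F[X]) (hP : P.Monic) (hQ : Q.Monic)
    (hPi : Irreducible P) (hQi : Irreducible Q) (hne : P ≠ Q)
    (heven : Even ((Fintype.card F - 1) / 2 * P.natDegree * Q.natDegree))
    (e₁ e₂ : F) (he₁ : e₁ = 1 ∨ e₁ = -1) (he₂ : e₂ = 1 ∨ e₂ = -1)
    (h₁ : P ∣ Q ^ ((Fintype.card F ^ P.natDegree - 1) / 2) - C e₁)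
    (h₂ : Q ∣ P ^ ((Fintype.card F ^ Q.natDegree - 1) / 2) - C e₂) :
    e₁ = e₂ := by
  classical
  set q := Fintype.card F with hqdef
  set d := P.natDegree with hddef
  set D := Q.natDegree with hDdef
  obtain ⟨p, hpc⟩ := CharP.exists F
  haveI := hpc
  obtain ⟨n, hp, hqeq⟩ := FiniteField.card F p
  haveI : Fact p.Prime := ⟨hp⟩
  set K := (P * Q).SplittingField with hK
  haveI : CharP K p := charP_of_injective_algebraMap (algebraMap F K).injective p
  set ι := algebraMap F K with hι
  have hq3 : 1 < q := Fintype.one_lt_card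
  let φ : K →+* K :=
    { toFun := fun x => x ^ q
      map_one' := one_pow q
      map_mul' := fun x y => mul_pow x y q
      map_zero' := zero_pow (by omega)
      map_add' := by
        intro x y
        show (x + y) ^ q = x ^ q + y ^ q
        rw [hqdef, hqeq]
        exact add_pow_char_pow x y p (n : ℕ) }
  have hφ : ∀ x : K, φ x = x ^ q := fun _ => rfl
  have hPQ0 : P * Q ≠ 0 := mul_ne_zero hP.ne_zero hQ.ne_zero
  have hsP : Splits (P.map ι) :=
    Splits.of_dvd (SplittingField.splits (P * Q)) (Polynomial.map_ne_zero hPQ0)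
      (by rw [Polynomial.map_mul]; exact dvd_mul_right _ _)
  have hsQ : Splits (Q.map ι) :=
    Splits.of_dvd (SplittingField.splits (P * Q)) (Polynomial.map_ne_zero hPQ0)
      (by rw [Polynomial.map_mul]; exact dvd_mul_left _ _)
  have hd0 : 0 < d := hPi.natDegree_pos
  have hD0 : 0 < D := hQi.natDegree_pos
  obtain ⟨α, hα⟩ := Splits.exists_eval_eq_zero hsP
    (by rw [degree_map, degree_eq_natDegree hPi.ne_zero]; norm_cast; omega)
  rw [eval_map] at hα
  obtain ⟨β, hβ⟩ := Splits.exists_eval_eq_zero hsQ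
    (by rw [degree_map, degree_eq_natDegree hQi.ne_zero]; norm_cast; omega)
  rw [eval_map] at hβ
  have hαa : aeval α P = 0 := by rwa [aeval_def]
  have hβa : aeval β Q = 0 := by rwa [aeval_def]
  have hfacP : P.map ι = ∏ i ∈ Finset.range d, (X - C (α ^ q ^ i)) :=
    auxQR_factor φ hφ hP hPi α hαa
  have hfacQ : Q.map ι = ∏ j ∈ Finset.range D, (X - C (β ^ q ^ j)) :=
    auxQR_factor φ hφ hQ hQi β hβa
  have hcompc : ∀ c : F, φ (ι c) = ι c := by
    intro c
    rw [hφ, ← map_pow, FiniteField.pow_card]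
  have key : ∀ (g : F[X]) (y : K), eval (φ y) (g.map ι) = φ (eval y (g.map ι)) := by
    intro g y
    rw [eval_map, eval_map, hom_eval₂]
    have hcι : φ.comp ι = ι := RingHom.ext hcompc
    rw [hcι]
  have hconj : ∀ (g : F[X]) (y : K) (i : ℕ),
      eval (y ^ q ^ i) (g.map ι) = (eval y (g.map ι)) ^ q ^ i := by
    intro g y i
    induction i with
    | zero => simp
    | succ i ih =>
      calc eval (y ^ q ^ (i + 1)) (g.map ι)
          = eval (φ (y ^ q ^ i)) (g.map ι) := by rw [hφ, ← pow_mul, ← pow_succ]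
        _ = φ (eval (y ^ q ^ i) (g.map ι)) := key g _
        _ = φ ((eval y (g.map ι)) ^ q ^ i) := by rw [ih]
        _ = (eval y (g.map ι)) ^ q ^ (i + 1) := by rw [hφ, ← pow_mul, ← pow_succ]
  set A := ∏ i ∈ Finset.range d, eval (α ^ q ^ i) (Q.map ι) with hA
  set B := ∏ j ∈ Finset.range D, eval (β ^ q ^ j) (P.map ι) with hB
  have hevalα : (eval α (Q.map ι)) ^ ((q ^ d - 1) / 2) = ι e₁ := by
    obtain ⟨S, hS⟩ := h₁
    have h0 : eval α (P.map ι) = 0 := by rw [eval_map]; exact hα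
    have h2 := congrArg (fun r : F[X] => eval α (r.map ι)) hS
    simp only [Polynomial.map_mul, Polynomial.map_sub, Polynomial.map_pow, map_C, eval_mul,
      eval_sub, eval_pow, eval_C, h0, zero_mul] at h2
    exact sub_eq_zero.mp h2
  have hevalβ : (eval β (P.map ι)) ^ ((q ^ D - 1) / 2) = ι e₂ := by
    obtain ⟨S, hS⟩ := h₂
    have h0 : eval β (Q.map ι) = 0 := by rw [eval_map]; exact hβ
    have h2 := congrArg (fun r : F[X] => eval β (r.map ι)) hS
    simp only [Polynomial.map_mul, Polynomial.map_sub, Polynomial.map_pow, map_C, eval_mul,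
      eval_sub, eval_pow, eval_C, h0, zero_mul] at h2
    exact sub_eq_zero.mp h2
  have hAe : A ^ ((q - 1) / 2) = ι e₁ := by
    have hA2 : A = (eval α (Q.map ι)) ^ (∑ i ∈ Finset.range d, q ^ i) := by
      rw [hA]
      simp only [hconj Q α]
      rw [Finset.prod_pow_eq_pow_sum]
    rw [hA2, ← pow_mul, auxQR_sum hq d]
    exact hevalα
  have hBe : B ^ ((q - 1) / 2) = ι e₂ := by
    have hB2 : B = (eval β (P.map ι)) ^ (∑ j ∈ Finset.range D, q ^ j) := by
      rw [hB]
      simp only [hconj P β]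
      rw [Finset.prod_pow_eq_pow_sum]
    rw [hB2, ← pow_mul, auxQR_sum hq D]
    exact hevalβ
  have hAexp : A = ∏ i ∈ Finset.range d, ∏ j ∈ Finset.range D, (α ^ q ^ i - β ^ q ^ j) := by
    rw [hA]
    refine Finset.prod_congr rfl fun i _ => ?_
    rw [hfacQ, eval_prod]
    refine Finset.prod_congr rfl fun j _ => ?_
    simp
  have hBexp : B = ∏ j ∈ Finset.range D, ∏ i ∈ Finset.range d, (β ^ q ^ j - α ^ q ^ i) := by
    rw [hB]
    refine Finset.prod_congr rfl fun j _ => ?_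
    rw [hfacP, eval_prod]
    refine Finset.prod_congr rfl fun i _ => ?_
    simp
  have hBA : B = (-1) ^ (d * D) * A := by
    rw [hBexp, hAexp]
    have hs : ∀ j i : ℕ, (β ^ q ^ j - α ^ q ^ i) = (-1) * (α ^ q ^ i - β ^ q ^ j) := by
      intros; ring
    simp_rw [hs]
    simp only [Finset.prod_mul_distrib, Finset.prod_const, Finset.card_range]
    rw [show (((-1 : K) ^ d) ^ D) = (-1 : K) ^ (d * D) by rw [← pow_mul]]
    congr 1
    exact Finset.prod_comm
  have hfinal : ι e₂ = ι e₁ := by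
    rw [← hBe, hBA, mul_pow, ← pow_mul, ← hAe]
    have heq : d * D * ((q - 1) / 2) = (q - 1) / 2 * d * D := by ring
    rw [heq, Even.neg_one_pow heven, one_mul]
  exact (((algebraMap F K).injective) hfinal).symm
end
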